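/- For any n and k, if F ⊆ binom([n], k) is an intersecting family with every (k-1)-subset of [n] in D(F), and [k] ∈ F, then for every (k-1)-subset X' of [n] \ [2k-1] with n ≥ 3k-1 there is F₃ ∈ F with F₃ = X' ∪ {1}; i.e., the members of F lying inside {1} ∪ [2k, n] form a full star centered at 1. (This is the key step in proving n ≤ 3k-2.) -/

import Mathlib

lemma aux_extract {A X : Finset ℕ} (h : X ⊆ A) (hc : A.card = X.card + 1) :
    ∃ c ∉ X, A = insert c X := by
  have h1 : (A \ X).card = 1 := by rw [Finset.card_sdiff_of_subset h]; omega
  obtain ⟨c, hc'⟩ := Finset.card_eq_one.mp h1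
  have hcA : c ∈ A \ X := hc' ▸ Finset.mem_singleton_self c
  rw [Finset.mem_sdiff] at hcA
  refine ⟨c, hcA.2, ?_⟩
  refine (Finset.eq_of_subset_of_card_le ?_ ?_).symm
  · exact Finset.insert_subset hcA.1 h
  · rw [Finset.card_insert_of_notMem hcA.2]; omega

theorem stmt_18 (n k : ℕ) (hn : 3 * k - 1 ≤ n) (F : Finset (Finset ℕ))
    (hF : ∀ A ∈ F, A ⊆ Finset.Icc 1 n ∧ A.card = k)
    (hint : ∀ A ∈ F, ∀ B ∈ F, (A ∩ B).Nonempty)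
    (hD : ∀ X ⊆ Finset.Icc 1 n, X.card = k - 1 →
      ∃ A ∈ F, ∃ B ∈ F, X = A \ B)
    (hk : Finset.Icc 1 k ∈ F) :
    ∀ X' ⊆ Finset.Icc (2 * k) n, X'.card = k - 1 → insert 1 X' ∈ F := by
  intro X' hX's hX'c
  -- dispose of k = 0
  rcases Nat.eq_zero_or_pos k with hk0 | hk1
  · exfalso
    obtain ⟨e, he⟩ := hint _ hk _ hk
    simp [hk0] at he
  -- basic arithmetic
  have hkn : k ≤ n := by omega
  -- X' is disjoint from [1,k]
  have hX'hi : ∀ a ∈ X', 2 * k ≤ a ∧ a ≤ n := by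
    intro a ha; have := hX's ha; rw [Finset.mem_Icc] at this; exact this
  -- get the member A = insert x X'
  have hX'n : X' ⊆ Finset.Icc 1 n := by
    intro a ha; rw [Finset.mem_Icc]; have := hX'hi a ha; omega
  obtain ⟨A, hAF, B, hBF, hAB⟩ := hD X' hX'n hX'c
  have hX'A : X' ⊆ A := by rw [hAB]; exact Finset.sdiff_subset
  have hAc : A.card = X'.card + 1 := by rw [(hF A hAF).2, hX'c]; omega
  obtain ⟨x, hxX', hAx⟩ := aux_extract hX'A hAc
  -- x ∈ [1,k]
  have hxk : 1 ≤ x ∧ x ≤ k := by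
    obtain ⟨e, he⟩ := hint A hAF _ hk
    rw [Finset.mem_inter, hAx, Finset.mem_insert, Finset.mem_Icc] at he
    rcases he.1 with rfl | heX'
    · exact he.2
    · exfalso; have := hX'hi e heX'; omega
  -- if x = 1 we are done
  rcases eq_or_lt_of_le hxk.1 with hx1 | hx2
  · rw [← hx1] at hAx; rw [← hAx]; exact hAF
  exfalso
  have hk2 : 2 ≤ k := by omega
  -- the member B₁ disjoint from [2,k], containing 1
  have hIcc2k : Finset.Icc 2 k ⊆ Finset.Icc 1 n := by
    apply Finset.Icc_subset_Icc <;> omega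
  obtain ⟨A₁, hA₁F, B₁, hB₁F, hAB₁⟩ := hD (Finset.Icc 2 k) hIcc2k (by
    rw [Nat.card_Icc]; omega)
  have hB₁2k : ∀ a ∈ B₁, a ∉ Finset.Icc 2 k := by
    intro a haB ha2k
    have : a ∈ A₁ \ B₁ := hAB₁ ▸ ha2k
    exact (Finset.mem_sdiff.mp this).2 haB
  -- star propagation lemma: one step
  have hone : ∀ W ⊆ Finset.Icc (k+1) n, insert x W ∈ F →
      ∀ Z ⊆ Finset.Icc (k+1) n, Z.card = k - 1 → Disjoint Z W → insert x Z ∈ F := by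
    intro W hWs hWF Z hZs hZc hdisj
    have hZn : Z ⊆ Finset.Icc 1 n := hZs.trans (Finset.Icc_subset_Icc (by omega) le_rfl)
    obtain ⟨C, hCF, D, hDF, hCD⟩ := hD Z hZn hZc
    have hZC : Z ⊆ C := by rw [hCD]; exact Finset.sdiff_subset
    have hCc : C.card = Z.card + 1 := by rw [(hF C hCF).2, hZc]; omega
    obtain ⟨c, hcZ, hCx⟩ := aux_extract hZC hCc
    have hZhi : ∀ a ∈ Z, k + 1 ≤ a := by
      intro a ha; exact (Finset.mem_Icc.mp (hZs ha)).1
    -- c ∈ [1,k]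
    have hck : c ≤ k := by
      obtain ⟨e, he⟩ := hint C hCF _ hk
      rw [Finset.mem_inter, hCx, Finset.mem_insert, Finset.mem_Icc] at he
      rcases he.1 with rfl | heZ
      · exact he.2.2
      · exfalso; have := hZhi e heZ; omega
    -- c = x using intersection with insert x W
    have hcx : c = x := by
      obtain ⟨e, he⟩ := hint C hCF _ hWF
      rw [Finset.mem_inter, hCx, Finset.mem_insert, Finset.mem_insert] at he
      rcases he.1 with rfl | heZ
      · rcases he.2 with h | h
        · exact h
        · exfalso
          have := (Finset.mem_Icc.mp (hWs h)).1; omega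
      · exfalso
        rcases he.2 with rfl | heW
        · have := hZhi e heZ; omega
        · exact (Finset.disjoint_left.mp hdisj heZ) heW
    rw [hcx] at hCx; rw [← hCx]; exact hCF
  -- star propagation: reachability by induction
  have hreach : ∀ m : ℕ, ∀ W ⊆ Finset.Icc (k+1) n, W.card = k - 1 → insert x W ∈ F →
      ∀ W' ⊆ Finset.Icc (k+1) n, W'.card = k - 1 → (W' \ W).card ≤ m →
      insert x W' ∈ F := by
    intro m
    induction m with
    | zero =>
      intro W hWs hWc hWF W' hW's hW'c hd
      have : W' = W := by
        apply Finset.eq_of_subset_of_card_le _ (by omega)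
        intro a ha
        by_contra haW
        have : a ∈ W' \ W := Finset.mem_sdiff.mpr ⟨ha, haW⟩
        have := Finset.card_pos.mpr ⟨a, this⟩
        omega
      rw [this]; exact hWF
    | succ m ih =>
      intro W hWs hWc hWF W' hW's hW'c hd
      rcases Nat.lt_or_ge (W' \ W).card (m+1) with hlt | hge
      · exact ih W hWs hWc hWF W' hW's hW'c (by omega)
      have hdc : (W' \ W).card = m + 1 := by omega
      obtain ⟨w', hw'⟩ : (W' \ W).Nonempty := Finset.card_pos.mp (by omega)
      rw [Finset.mem_sdiff] at hw'
      obtain ⟨w, hw⟩ : (W \ W').Nonempty := by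
        rw [Finset.sdiff_nonempty]
        intro hsub
        have : W = W' := Finset.eq_of_subset_of_card_le hsub (by omega)
        rw [this, Finset.sdiff_self, Finset.card_empty] at hdc; omega
      rw [Finset.mem_sdiff] at hw
      -- pick Z disjoint from W ∪ {w'}
      have hcard : k - 1 ≤ (Finset.Icc (k+1) n \ insert w' W).card := by
        have h1 : (insert w' W).card = k := by
          rw [Finset.card_insert_of_notMem hw'.2, hWc]; omega
        have h2 := Finset.le_card_sdiff (insert w' W) (Finset.Icc (k+1) n)
        rw [Nat.card_Icc] at *
        omega
      obtain ⟨Z, hZs, hZc⟩ := Finset.exists_subset_card_eq hcard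
      have hZs' : Z ⊆ Finset.Icc (k+1) n := hZs.trans Finset.sdiff_subset
      have hZdW : Disjoint Z W := by
        rw [Finset.disjoint_left]
        intro a haZ haW
        exact (Finset.mem_sdiff.mp (hZs haZ)).2 (Finset.mem_insert_of_mem haW)
      have hZF : insert x Z ∈ F := hone W hWs hWF Z hZs' hZc hZdW
      -- W₂ = insert w' (W.erase w)
      set W₂ : Finset ℕ := insert w' (W.erase w) with hW₂def
      have hw'W₂ : w' ∉ W.erase w := fun h => hw'.2 (Finset.mem_of_mem_erase h)
      have hW₂c : W₂.card = k - 1 := by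
        rw [hW₂def, Finset.card_insert_of_notMem hw'W₂,
          Finset.card_erase_of_mem hw.1, hWc]
        omega
      have hW₂s : W₂ ⊆ Finset.Icc (k+1) n := by
        rw [hW₂def]
        exact Finset.insert_subset (hW's hw'.1)
          ((Finset.erase_subset _ _).trans hWs)
      have hW₂dZ : Disjoint W₂ Z := by
        rw [Finset.disjoint_left]
        intro a haW₂ haZ
        have : a ∈ insert w' W := by
          rw [hW₂def, Finset.mem_insert] at haW₂
          rcases haW₂ with rfl | h
          · exact Finset.mem_insert_self _ _
          · exact Finset.mem_insert_of_mem (Finset.mem_of_mem_erase h)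
        exact (Finset.mem_sdiff.mp (hZs haZ)).2 this
      have hW₂F : insert x W₂ ∈ F := hone Z hZs' hZF W₂ hW₂s hW₂c hW₂dZ
      -- apply ih from W₂ to W'
      apply ih W₂ hW₂s hW₂c hW₂F W' hW's hW'c
      have hsub : W' \ W₂ ⊆ (W' \ W).erase w' := by
        intro a ha
        rw [Finset.mem_sdiff, hW₂def, Finset.mem_insert] at ha
        push_neg at ha
        obtain ⟨haW', hane, haerase⟩ := ha
        rw [Finset.mem_erase, Finset.mem_sdiff]
        refine ⟨hane, haW', ?_⟩
        intro haW
        apply haerase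
        rw [Finset.mem_erase]
        exact ⟨fun h => hw.2 (h ▸ haW'), haW⟩
      have := Finset.card_le_card hsub
      rw [Finset.card_erase_of_mem (Finset.mem_sdiff.mpr hw'), hdc] at this
      omega
  -- properties of B₁
  have h1B₁ : (1 : ℕ) ∈ B₁ := by
    obtain ⟨e, he⟩ := hint _ hB₁F _ hk
    rw [Finset.mem_inter, Finset.mem_Icc] at he
    have : e = 1 := by
      by_contra hne
      exact hB₁2k e he.1 (Finset.mem_Icc.mpr ⟨by omega, he.2.2⟩)
    rw [← this]; exact he.1
  have hY₀s : B₁.erase 1 ⊆ Finset.Icc (k+1) n := by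
    intro a ha
    rw [Finset.mem_erase] at ha
    have han : a ∈ Finset.Icc 1 n := (hF B₁ hB₁F).1 ha.2
    rw [Finset.mem_Icc] at han ⊢
    have := hB₁2k a ha.2
    rw [Finset.mem_Icc] at this
    constructor
    · by_contra h; push_neg at h
      exact this ⟨by omega, by omega⟩
    · exact han.2
  -- pick W* disjoint from B₁.erase 1
  have hY₀c : (B₁.erase 1).card = k - 1 := by
    rw [Finset.card_erase_of_mem h1B₁, (hF B₁ hB₁F).2]
  have hWcard : k - 1 ≤ (Finset.Icc (k+1) n \ B₁.erase 1).card := by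
    have := Finset.le_card_sdiff (B₁.erase 1) (Finset.Icc (k+1) n)
    rw [Nat.card_Icc] at *
    omega
  obtain ⟨W', hW's, hW'c⟩ := Finset.exists_subset_card_eq hWcard
  have hW's' : W' ⊆ Finset.Icc (k+1) n := hW's.trans Finset.sdiff_subset
  -- X' as starting point
  have hX'sub : X' ⊆ Finset.Icc (k+1) n :=
    hX's.trans (Finset.Icc_subset_Icc (by omega) le_rfl)
  have hW'F : insert x W' ∈ F :=
    hreach (W' \ X').card X' hX'sub hX'c (hAx ▸ hAF) W' hW's' hW'c le_rfl
  -- contradiction with B₁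
  obtain ⟨e, he⟩ := hint _ hW'F _ hB₁F
  rw [Finset.mem_inter, Finset.mem_insert] at he
  rcases he.1 with rfl | heW'
  · exact hB₁2k e he.2 (Finset.mem_Icc.mpr ⟨hx2, hxk.2⟩)
  · have hek : k + 1 ≤ e := (Finset.mem_Icc.mp (hW's' heW')).1
    have : e ∈ B₁.erase 1 := Finset.mem_erase.mpr ⟨by omega, he.2⟩
    exact (Finset.mem_sdiff.mp (hW's heW')).2 this
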